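/- Fix k ≥ 1 and shifts r_1,…,r_k ∈ {1,…,⌈n/2⌉}. Consider the map that takes a multiset d of n points in ℝ², partitions it into a bin B_1 of the ⌊n/2⌋ points with smallest x-values and a bin B_2 of the remaining ⌈n/2⌉ points, and for each p ∈ [k] and each i ∈ {1,…,⌊n/2⌋} computes the slope between the i-th point of B_1 and the ((i + r_p) mod ⌈n/2⌉)-th point of B_2 (under any fixed orderings of the bins that agree on common elements). If d and d' have multiset distance 1, then (a) the resulting bins differ in at most one element in each of B_1 and B_2, and (b) the resulting multisets of k·⌊n/2⌋ slopes have multiset distance at most 2k. -/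

import Mathlib

open MeasureTheory

/-- Multiset distance: half the L1 distance between multiplicity functions. -/
noncomputable def msDist {α : Type*} (d d' : Multiset α) : ℕ :=
  letI := Classical.decEq α
  ((d - d').card + (d' - d).card) / 2

/-- The Slope convention for an unordered pair of points. -/
noncomputable def uslope (w w' : ℝ × ℝ) : EReal :=
  if w = w' then 0
  else if w.1 = w'.1 then ⊤
  else (((w'.2 - w.2) / (w'.1 - w.1) : ℝ) : EReal)

/-- The list of the points of `d` sorted lexicographically (primarily by `x`-value). -/
noncomputable def sortLex (d : Multiset (ℝ × ℝ)) : List (ℝ × ℝ) :=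
  ((d.map (toLex : ℝ × ℝ → ℝ ×ₗ ℝ)).sort (· ≤ ·)).map (ofLex)

/-- The bin `B₁` of the `⌊n/2⌋` points of `d` with smallest `x`-values. -/
noncomputable def binList1 (d : Multiset (ℝ × ℝ)) : List (ℝ × ℝ) :=
  (sortLex d).take (Multiset.card d / 2)

/-- The bin `B₂` of the remaining `⌈n/2⌉` points of `d`. -/
noncomputable def binList2 (d : Multiset (ℝ × ℝ)) : List (ℝ × ℝ) :=
  (sortLex d).drop (Multiset.card d / 2)

/-- Two lists (orderings of the bins) agree on common elements: they have the same length
and coincide except possibly at one position. -/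
def agreeExceptOne (L L' : List (ℝ × ℝ)) : Prop :=
  L.length = L'.length ∧ ∃ j : ℕ, ∀ i : ℕ, i ≠ j → L.getD i (0, 0) = L'.getD i (0, 0)

/-- The multiset of `k·⌊n/2⌋` slopes produced by matching, for each `p ∈ [k]`, the `i`-th
point of the (ordered) bin `V₁` with the `((i + r p) mod ⌈n/2⌉)`-th point of the (ordered)
bin `V₂`, for `i = 1, …, ⌊n/2⌋`. -/
noncomputable def matchSlopes (k : ℕ) (r : Fin k → ℕ) (V1 V2 : List (ℝ × ℝ)) :
    Multiset EReal :=
  (Finset.univ : Finset (Fin k)).val.bind (fun p =>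
    (Multiset.range V1.length).map (fun i =>
      uslope (V1.getD i (0, 0)) (V2.getD ((i + r p) % V2.length) (0, 0))))

/- ### Auxiliary lemmas -/

lemma msDist_le_of {α : Type*} {A B : Multiset α} (u a b : Multiset α)
    (hA : A = u + a) (hB : B = u + b) {m : ℕ}
    (ha : Multiset.card a ≤ m) (hb : Multiset.card b ≤ m) : msDist A B ≤ m := by
  classical
  simp only [msDist, hA, hB, add_tsub_add_eq_tsub_left]
  have h1 : Multiset.card (a - b) ≤ m :=
    le_trans (Multiset.card_le_card tsub_le_self) ha
  have h2 : Multiset.card (b - a) ≤ m :=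
    le_trans (Multiset.card_le_card tsub_le_self) hb
  omega

lemma msDist_one_decomp {α : Type*} {d d' : Multiset α} {n : ℕ}
    (hd : Multiset.card d = n) (hd' : Multiset.card d' = n) (h : msDist d d' = 1) :
    ∃ (u : Multiset α) (x y : α), d = x ::ₘ u ∧ d' = y ::ₘ u := by
  classical
  have hsub1 : d - d' + d ∩ d' = d := Multiset.sub_add_inter d d'
  have hsub2 : d' - d + d' ∩ d = d' := Multiset.sub_add_inter d' d
  have hic : d ∩ d' = d' ∩ d := Multiset.inter_comm d d'
  have hc1 : Multiset.card (d - d') + Multiset.card (d ∩ d') = n := by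
    rw [← Multiset.card_add, hsub1, hd]
  have hc2 : Multiset.card (d' - d) + Multiset.card (d ∩ d') = n := by
    rw [hic, ← Multiset.card_add, hsub2, hd']
  have hdist : (Multiset.card (d - d') + Multiset.card (d' - d)) / 2 = 1 := by
    simpa [msDist] using h
  have hx : Multiset.card (d - d') = 1 := by omega
  have hy : Multiset.card (d' - d) = 1 := by omega
  obtain ⟨x, hxs⟩ := Multiset.card_eq_one.1 hx
  obtain ⟨y, hys⟩ := Multiset.card_eq_one.1 hy
  rw [hxs, Multiset.singleton_add] at hsub1
  rw [hys, Multiset.singleton_add, ← hic] at hsub2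
  exact ⟨d ∩ d', x, y, hsub1.symm, hsub2.symm⟩

lemma sort_cons_eq {α : Type*} [LinearOrder α] (a : α) (s : Multiset α) :
    Multiset.sort (a ::ₘ s) (· ≤ ·) =
      List.orderedInsert (· ≤ ·) a (Multiset.sort s (· ≤ ·)) := by
  refine List.Perm.eq_of_pairwise' (Multiset.pairwise_sort _ _)
    (List.Pairwise.orderedInsert a _ (Multiset.pairwise_sort _ _)) ?_
  refine Multiset.coe_eq_coe.1 ?_
  rw [Multiset.sort_eq, Multiset.coe_eq_coe.2 (List.perm_orderedInsert _ a _),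
    ← Multiset.cons_coe, Multiset.sort_eq]

lemma take_OI {α : Type*} [LinearOrder α] (a : α) (l : List α) (m : ℕ) :
    (↑((List.orderedInsert (· ≤ ·) a l).take m) : Multiset α) = ↑(l.take m) ∨
      (1 ≤ m ∧
        (↑((List.orderedInsert (· ≤ ·) a l).take m) : Multiset α) = a ::ₘ ↑(l.take (m-1))) := by
  induction l generalizing m with
  | nil =>
    cases m with
    | zero => left; simp
    | succ m => right; exact ⟨Nat.succ_le_succ (Nat.zero_le _), by simp⟩
  | cons b l ih =>
    simp only [List.orderedInsert]
    by_cases hab : a ≤ b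
    · simp only [if_pos hab]
      cases m with
      | zero => left; simp
      | succ m =>
        right
        refine ⟨Nat.succ_le_succ (Nat.zero_le _), ?_⟩
        simp [List.take_succ_cons, Multiset.cons_coe]
    · simp only [if_neg hab]
      cases m with
      | zero => left; simp
      | succ m =>
        rcases ih m with h | ⟨hm, h⟩
        · left
          simp only [List.take_succ_cons, ← Multiset.cons_coe, h]
        · right
          refine ⟨Nat.succ_le_succ (Nat.zero_le _), ?_⟩
          obtain ⟨mm, rfl⟩ : ∃ mm, m = mm + 1 := ⟨m - 1, by omega⟩
          simp only [List.take_succ_cons, ← Multiset.cons_coe, h, Nat.add_sub_cancel]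
          rw [Multiset.cons_swap]

lemma drop_OI {α : Type*} [LinearOrder α] (a : α) (l : List α) (m : ℕ) :
    (↑((List.orderedInsert (· ≤ ·) a l).drop m) : Multiset α) = a ::ₘ ↑(l.drop m) ∨
      (1 ≤ m ∧
        (↑((List.orderedInsert (· ≤ ·) a l).drop m) : Multiset α) = ↑(l.drop (m-1))) := by
  have hOI : (↑(List.orderedInsert (· ≤ ·) a l) : Multiset α) = a ::ₘ ↑l :=
    Multiset.coe_eq_coe.2 (List.perm_orderedInsert _ a l)
  have hsplit : ∀ (L : List α) (j : ℕ), (↑(L.take j) : Multiset α) + ↑(L.drop j) = ↑L := by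
    intro L j
    rw [Multiset.coe_add, List.take_append_drop]
  rcases take_OI a l m with h | ⟨hm, h⟩
  · left
    have h1 := hsplit (List.orderedInsert (· ≤ ·) a l) m
    rw [hOI, h] at h1
    have h2 := hsplit l m
    have h3 : (↑(l.take m) : Multiset α) + ↑((List.orderedInsert (· ≤ ·) a l).drop m)
        = ↑(l.take m) + (a ::ₘ ↑(l.drop m)) := by
      rw [h1, ← h2, ← Multiset.singleton_add, ← Multiset.singleton_add]
      ac_rfl
    exact add_left_cancel h3
  · right
    refine ⟨hm, ?_⟩
    have h1 := hsplit (List.orderedInsert (· ≤ ·) a l) m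
    rw [hOI, h] at h1
    have h2 := hsplit l (m-1)
    have h3 : (a ::ₘ ↑(l.take (m-1)) : Multiset α) + ↑((List.orderedInsert (· ≤ ·) a l).drop m)
        = (a ::ₘ ↑(l.take (m-1))) + ↑(l.drop (m-1)) := by
      rw [h1, ← h2, ← Multiset.singleton_add, ← Multiset.singleton_add]
      ac_rfl
    exact add_left_cancel h3

lemma take_succ_decomp {α : Type*} (L : List α) (j : ℕ) (hj : j < L.length) :
    (↑(L.take (j+1)) : Multiset α) = ↑(L.take j) + {L[j]} := by
  rw [List.take_succ, List.getElem?_eq_getElem hj]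
  rw [← Multiset.coe_add]
  rfl

lemma drop_pred_decomp {α : Type*} (L : List α) (j : ℕ) (hj : j < L.length) :
    (↑(L.drop j) : Multiset α) = ↑(L.drop (j+1)) + {L[j]} := by
  rw [List.drop_eq_getElem_cons hj, ← Multiset.cons_coe, ← Multiset.singleton_add]
  ac_rfl

lemma bin_decomp (u : Multiset (ℝ × ℝ)) (x : ℝ × ℝ) {lst : List (ℝ ×ₗ ℝ)} {m : ℕ}
    (hlst : lst = Multiset.sort (u.map toLex) (· ≤ ·))
    (hm : m = (Multiset.card u + 1) / 2) :
    ((↑(binList1 (x ::ₘ u)) : Multiset (ℝ × ℝ)) = Multiset.map ofLex ↑(lst.take m) ∨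
      (1 ≤ m ∧
        (↑(binList1 (x ::ₘ u)) : Multiset (ℝ × ℝ))
          = x ::ₘ Multiset.map ofLex ↑(lst.take (m-1)))) ∧
    ((↑(binList2 (x ::ₘ u)) : Multiset (ℝ × ℝ)) = x ::ₘ Multiset.map ofLex ↑(lst.drop m) ∨
      (1 ≤ m ∧
        (↑(binList2 (x ::ₘ u)) : Multiset (ℝ × ℝ)) = Multiset.map ofLex ↑(lst.drop (m-1)))) := by
  subst hlst hm
  have hcard : Multiset.card (x ::ₘ u) = Multiset.card u + 1 := by simp
  have hsort : sortLex (x ::ₘ u) =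
      (List.orderedInsert (· ≤ ·) (toLex x)
        (Multiset.sort (u.map toLex) (· ≤ ·))).map ofLex := by
    unfold sortLex
    rw [Multiset.map_cons, sort_cons_eq]
  constructor
  · unfold binList1
    rw [hsort, hcard, ← List.map_take, ← Multiset.map_coe]
    rcases take_OI (toLex x) (Multiset.sort (u.map toLex) (· ≤ ·))
        ((Multiset.card u + 1) / 2) with h | ⟨hm1, h⟩
    · left; rw [h]
    · right
      refine ⟨hm1, ?_⟩
      rw [h, Multiset.map_cons]
      rfl
  · unfold binList2
    rw [hsort, hcard, ← List.map_drop, ← Multiset.map_coe]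
    rcases drop_OI (toLex x) (Multiset.sort (u.map toLex) (· ≤ ·))
        ((Multiset.card u + 1) / 2) with h | ⟨hm1, h⟩
    · left
      rw [h, Multiset.map_cons]
      rfl
    · right
      exact ⟨hm1, by rw [h]⟩

/-- **Sensitivity of the kHalf slope-selection procedure.** If `d` and `d'` are size-`n`
multisets of points at multiset distance `1`, then (a) the two bins (the `⌊n/2⌋` points
with smallest `x`-values, and the rest) differ in at most one element each, and (b) for any
fixed orderings of the bins that agree on common elements, the resulting multisets of
`k·⌊n/2⌋` slopes have multiset distance at most `2k`. -/
theorem khalf_slopes_sensitivity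
    (n k : ℕ) (hk : 1 ≤ k) (r : Fin k → ℕ)
    (hr : ∀ p, 1 ≤ r p ∧ r p ≤ (n + 1) / 2)
    (d d' : Multiset (ℝ × ℝ))
    (hd : Multiset.card d = n) (hd' : Multiset.card d' = n)
    (hnb : msDist d d' = 1) :
    (msDist (↑(binList1 d) : Multiset (ℝ × ℝ)) (↑(binList1 d')) ≤ 1 ∧
      msDist (↑(binList2 d) : Multiset (ℝ × ℝ)) (↑(binList2 d')) ≤ 1) ∧
    (∀ L1 L2 L1' L2' : List (ℝ × ℝ),
      (↑L1 : Multiset (ℝ × ℝ)) = ↑(binList1 d) → (↑L2 : Multiset (ℝ × ℝ)) = ↑(binList2 d) →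
      (↑L1' : Multiset (ℝ × ℝ)) = ↑(binList1 d') → (↑L2' : Multiset (ℝ × ℝ)) = ↑(binList2 d') →
      agreeExceptOne L1 L1' → agreeExceptOne L2 L2' →
      msDist (matchSlopes k r L1 L2) (matchSlopes k r L1' L2') ≤ 2 * k) := by
  classical
  obtain ⟨u, x, y, hdx, hdy⟩ := msDist_one_decomp hd hd' hnb
  subst hdx hdy
  set lst : List (ℝ ×ₗ ℝ) := Multiset.sort (u.map toLex) (· ≤ ·) with hlst
  set m : ℕ := (Multiset.card u + 1) / 2 with hmdef
  have hlen : lst.length = Multiset.card u := by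
    rw [hlst, Multiset.length_sort, Multiset.card_map]
  have hmlt : 1 ≤ m → m - 1 < lst.length := by
    intro h1
    rw [hlen]
    omega
  have hxdec := bin_decomp u x hlst hmdef
  have hydec := bin_decomp u y hlst hmdef
  constructor
  · constructor
    · -- bin 1
      rcases hxdec.1 with hx1 | ⟨hm1, hx1⟩ <;> rcases hydec.1 with hy1 | ⟨hm1', hy1⟩
      · refine msDist_le_of (Multiset.map ofLex ↑(lst.take m)) 0 0 ?_ ?_ (by simp) (by simp)
        · rw [add_zero]; exact hx1
        · rw [add_zero]; exact hy1
      · have ht := take_succ_decomp lst (m-1) (hmlt hm1')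
        rw [(by omega : m - 1 + 1 = m)] at ht
        refine msDist_le_of (Multiset.map ofLex ↑(lst.take (m-1)))
          {ofLex lst[m-1]} {y} ?_ ?_ (by simp) (by simp)
        · rw [hx1, ht, Multiset.map_add, Multiset.map_singleton]
        · rw [hy1, ← Multiset.singleton_add, add_comm]
      · have ht := take_succ_decomp lst (m-1) (hmlt hm1)
        rw [(by omega : m - 1 + 1 = m)] at ht
        refine msDist_le_of (Multiset.map ofLex ↑(lst.take (m-1)))
          {x} {ofLex lst[m-1]} ?_ ?_ (by simp) (by simp)
        · rw [hx1, ← Multiset.singleton_add, add_comm]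
        · rw [hy1, ht, Multiset.map_add, Multiset.map_singleton]
      · refine msDist_le_of (Multiset.map ofLex ↑(lst.take (m-1)))
          {x} {y} ?_ ?_ (by simp) (by simp)
        · rw [hx1, ← Multiset.singleton_add, add_comm]
        · rw [hy1, ← Multiset.singleton_add, add_comm]
    · -- bin 2
      rcases hxdec.2 with hx2 | ⟨hm1, hx2⟩ <;> rcases hydec.2 with hy2 | ⟨hm1', hy2⟩
      · refine msDist_le_of (Multiset.map ofLex ↑(lst.drop m))
          {x} {y} ?_ ?_ (by simp) (by simp)
        · rw [hx2, ← Multiset.singleton_add, add_comm]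
        · rw [hy2, ← Multiset.singleton_add, add_comm]
      · have ht := drop_pred_decomp lst (m-1) (hmlt hm1')
        rw [(by omega : m - 1 + 1 = m)] at ht
        refine msDist_le_of (Multiset.map ofLex ↑(lst.drop m))
          {x} {ofLex lst[m-1]} ?_ ?_ (by simp) (by simp)
        · rw [hx2, ← Multiset.singleton_add, add_comm]
        · rw [hy2, ht, Multiset.map_add, Multiset.map_singleton]
      · have ht := drop_pred_decomp lst (m-1) (hmlt hm1)
        rw [(by omega : m - 1 + 1 = m)] at ht
        refine msDist_le_of (Multiset.map ofLex ↑(lst.drop m))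
          {ofLex lst[m-1]} {y} ?_ ?_ (by simp) (by simp)
        · rw [hx2, ht, Multiset.map_add, Multiset.map_singleton]
        · rw [hy2, ← Multiset.singleton_add, add_comm]
      · refine msDist_le_of (Multiset.map ofLex ↑(lst.drop (m-1))) 0 0 ?_ ?_ (by simp) (by simp)
        · rw [add_zero]; exact hx2
        · rw [add_zero]; exact hy2
  · -- part (b)
    intro L1 L2 L1' L2' e1 e2 e1' e2' hA1 hA2
    obtain ⟨hlen1, j1, hj1⟩ := hA1
    obtain ⟨hlen2, j2, hj2⟩ := hA2
    have hsortlen : (sortLex (x ::ₘ u)).length = n := by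
      unfold sortLex
      rw [List.length_map, Multiset.length_sort, Multiset.card_map, hd]
    have hc1 : L1.length = n / 2 := by
      have h := congrArg Multiset.card e1
      rw [Multiset.coe_card, Multiset.coe_card] at h
      rw [h]
      unfold binList1
      rw [List.length_take, hsortlen, hd]
      omega
    have hc2 : L2.length = n - n / 2 := by
      have h := congrArg Multiset.card e2
      rw [Multiset.coe_card, Multiset.coe_card] at h
      rw [h]
      unfold binList2
      rw [List.length_drop, hsortlen, hd]
    have hN : L1.length ≤ L2.length := by rw [hc1, hc2]; omega
    set N1 := L1.length with hN1
    set N2 := L2.length with hN2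
    set f : Fin k → ℕ → EReal := fun p i =>
      uslope (L1.getD i (0, 0)) (L2.getD ((i + r p) % N2) (0, 0)) with hf
    set g : Fin k → ℕ → EReal := fun p i =>
      uslope (L1'.getD i (0, 0)) (L2'.getD ((i + r p) % N2) (0, 0)) with hg
    have hM1 : matchSlopes k r L1 L2 =
        (Finset.univ : Finset (Fin k)).val.bind (fun p => (Multiset.range N1).map (f p)) := rfl
    have hM2 : matchSlopes k r L1' L2' =
        (Finset.univ : Finset (Fin k)).val.bind (fun p => (Multiset.range N1).map (g p)) := by
      simp only [matchSlopes, hg, ← hlen1, ← hlen2]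
    have hsplit : ∀ (F : ℕ → EReal) (p : Fin k),
        (Multiset.range N1).map F =
          ((Multiset.range N1).filter
              (fun i => ¬ (i = j1 ∨ (i + r p) % N2 = j2))).map F +
          ((Multiset.range N1).filter
              (fun i => i = j1 ∨ (i + r p) % N2 = j2)).map F := by
      intro F p
      rw [← Multiset.map_add, add_comm, Multiset.filter_add_not]
    have hsame : ∀ (p : Fin k) (i : ℕ),
        i ∈ (Multiset.range N1).filter (fun i => ¬ (i = j1 ∨ (i + r p) % N2 = j2)) →
        g p i = f p i := by
      intro p i hi
      rw [Multiset.mem_filter] at hi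
      obtain ⟨-, hnp⟩ := hi
      push_neg at hnp
      obtain ⟨hne1, hne2⟩ := hnp
      simp only [hf, hg]
      rw [← hj1 i hne1, ← hj2 _ hne2]
    have hcardP : ∀ p : Fin k,
        Multiset.card (((Multiset.range N1).filter
            (fun i => i = j1 ∨ (i + r p) % N2 = j2)).map (f p)) ≤ 2 := by
      intro p
      rw [Multiset.card_map, ← Finset.range_val, ← Finset.filter_val]
      show ((Finset.range N1).filter (fun i => i = j1 ∨ (i + r p) % N2 = j2)).card ≤ 2
      rw [Finset.filter_or]
      refine le_trans (Finset.card_union_le _ _) ?_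
      have h1 : ((Finset.range N1).filter (fun i => i = j1)).card ≤ 1 := by
        rw [Finset.card_le_one]
        intro a ha b hb
        rw [Finset.mem_filter] at ha hb
        rw [ha.2, hb.2]
      have h2 : ((Finset.range N1).filter (fun i => (i + r p) % N2 = j2)).card ≤ 1 := by
        rw [Finset.card_le_one]
        intro a ha b hb
        rw [Finset.mem_filter, Finset.mem_range] at ha hb
        obtain ⟨ha1, ha2⟩ := ha
        obtain ⟨hb1, hb2⟩ := hb
        have hmeq : (a + r p) % N2 = (b + r p) % N2 := by rw [ha2, hb2]
        have hmod : a % N2 = b % N2 :=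
          (Nat.ModEq.refl (r p)).add_right_cancel hmeq
        rwa [Nat.mod_eq_of_lt (lt_of_lt_of_le ha1 hN),
          Nat.mod_eq_of_lt (lt_of_lt_of_le hb1 hN)] at hmod
      omega
    rw [hM1, hM2]
    refine msDist_le_of
      ((Finset.univ : Finset (Fin k)).val.bind (fun p =>
        ((Multiset.range N1).filter
          (fun i => ¬ (i = j1 ∨ (i + r p) % N2 = j2))).map (f p)))
      ((Finset.univ : Finset (Fin k)).val.bind (fun p =>
        ((Multiset.range N1).filter
          (fun i => i = j1 ∨ (i + r p) % N2 = j2)).map (f p)))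
      ((Finset.univ : Finset (Fin k)).val.bind (fun p =>
        ((Multiset.range N1).filter
          (fun i => i = j1 ∨ (i + r p) % N2 = j2)).map (g p)))
      ?_ ?_ ?_ ?_
    · rw [← Multiset.bind_add]
      congr 1
      funext p
      exact hsplit (f p) p
    · rw [← Multiset.bind_add]
      congr 1
      funext p
      rw [show ((Multiset.range N1).filter
            (fun i => ¬ (i = j1 ∨ (i + r p) % N2 = j2))).map (f p)
          = ((Multiset.range N1).filter
            (fun i => ¬ (i = j1 ∨ (i + r p) % N2 = j2))).map (g p) from
          (Multiset.map_congr rfl (fun i hi => hsame p i hi)).symm]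
      exact hsplit (g p) p
    · rw [Multiset.card_bind]
      refine le_trans (Multiset.sum_le_card_nsmul _ 2 ?_) ?_
      · intro c hc
        rw [Multiset.mem_map] at hc
        obtain ⟨p, -, rfl⟩ := hc
        exact hcardP p
      · simp only [Multiset.card_map]
        have : Multiset.card (Finset.univ : Finset (Fin k)).val = k := by
          simp [Finset.card_univ]
        rw [this, smul_eq_mul, mul_comm]
    · rw [Multiset.card_bind]
      refine le_trans (Multiset.sum_le_card_nsmul _ 2 ?_) ?_
      · intro c hc
        rw [Multiset.mem_map] at hc
        obtain ⟨p, -, rfl⟩ := hc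
        simpa only [Function.comp_apply, Multiset.card_map] using hcardP p
      · simp only [Multiset.card_map]
        have : Multiset.card (Finset.univ : Finset (Fin k)).val = k := by
          simp [Finset.card_univ]
        rw [this, smul_eq_mul, mul_comm]
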